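/- Let G be a finite simple graph on N ≥ 2 vertices in which every vertex has positive degree. Then the maximal volume-biased discrepancy is bounded by the second largest normalized eigenvalue in absolute value: ∂̃ ≤ λ. -/

import Mathlib

open Finset

noncomputable section

/-- Degree of vertex `i`. -/
def deg (N : ℕ) (a : Fin N → Fin N → ℝ) (i : Fin N) : ℝ := ∑ j, a i j

/-- Number of edges between `A` and `B` (ordered pairs). -/
def eCount (N : ℕ) (a : Fin N → Fin N → ℝ) (A B : Finset (Fin N)) : ℝ :=
  ∑ i ∈ A, ∑ j ∈ B, a i j

/-- Volume of a set of vertices. -/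
def vol (N : ℕ) (a : Fin N → Fin N → ℝ) (A : Finset (Fin N)) : ℝ :=
  ∑ i ∈ A, deg N a i

/-- Volume-biased discrepancy `δ̃(A,B)`. -/
def discVol (N : ℕ) (a : Fin N → Fin N → ℝ) (A B : Finset (Fin N)) : ℝ :=
  eCount N a A B / vol N a Finset.univ -
    (vol N a A / vol N a Finset.univ) * (vol N a B / vol N a Finset.univ)

/-- `∂̃ = max_{A,B} |δ̃(A,B)|`. -/
def maxDiscVol (N : ℕ) (a : Fin N → Fin N → ℝ) : ℝ :=
  Finset.univ.sup' Finset.univ_nonempty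
    (fun p : Finset (Fin N) × Finset (Fin N) => |discVol N a p.1 p.2|)

section AuxLem
variable {N : ℕ}


variable {N : ℕ}

lemma aux_pars (u : Fin N → Fin N → ℝ)
    (hexp : ∀ x : Fin N → ℝ, ∀ i, x i = ∑ k, (∑ j, u k j * x j) * u k i)
    (x y : Fin N → ℝ) :
    ∑ i, x i * y i = ∑ k, (∑ j, u k j * x j) * (∑ j, u k j * y j) := by
  have h1 : ∀ i, x i * y i = ∑ k, (∑ j, u k j * x j) * (u k i * y i) := by
    intro i
    rw [show x i * y i = (∑ k, (∑ j, u k j * x j) * u k i) * y i by rw [← hexp x i],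
       Finset.sum_mul]
    exact Finset.sum_congr rfl fun k _ => by ring
  simp_rw [h1]
  rw [Finset.sum_comm]
  exact Finset.sum_congr rfl fun k _ => (Finset.mul_sum _ _ _).symm

lemma aux_spec (Bmat : Matrix (Fin N) (Fin N) ℝ)
    (u : Fin N → Fin N → ℝ) (ν : Fin N → ℝ)
    (hBu : ∀ k i, (∑ j, Bmat i j * u k j) = ν k * u k i)
    (hexp : ∀ x : Fin N → ℝ, ∀ i, x i = ∑ k, (∑ j, u k j * x j) * u k i)
    (x y : Fin N → ℝ) :
    ∑ i, x i * (∑ j, Bmat i j * y j)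
      = ∑ k, ν k * ((∑ j, u k j * x j) * (∑ j, u k j * y j)) := by
  have h1 : ∀ i, (∑ j, Bmat i j * y j) = ∑ k, (∑ l, u k l * y l) * (ν k * u k i) := by
    intro i
    calc ∑ j, Bmat i j * y j
        = ∑ j, Bmat i j * (∑ k, (∑ l, u k l * y l) * u k j) := by
          exact Finset.sum_congr rfl fun j _ => by rw [← hexp y j]
      _ = ∑ j, ∑ k, (∑ l, u k l * y l) * (Bmat i j * u k j) := by
          refine Finset.sum_congr rfl fun j _ => ?_
          rw [Finset.mul_sum]; exact Finset.sum_congr rfl fun k _ => by ring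
      _ = ∑ k, ∑ j, (∑ l, u k l * y l) * (Bmat i j * u k j) := by rw [Finset.sum_comm]
      _ = ∑ k, (∑ l, u k l * y l) * (ν k * u k i) := by
          refine Finset.sum_congr rfl fun k _ => ?_
          rw [← Finset.mul_sum, hBu]
  calc ∑ i, x i * (∑ j, Bmat i j * y j)
      = ∑ i, ∑ k, (∑ l, u k l * y l) * ν k * (u k i * x i) := by
        refine Finset.sum_congr rfl fun i _ => ?_
        rw [h1, Finset.mul_sum]; exact Finset.sum_congr rfl fun k _ => by ring
    _ = ∑ k, ∑ i, (∑ l, u k l * y l) * ν k * (u k i * x i) := by rw [Finset.sum_comm]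
    _ = ∑ k, ν k * ((∑ j, u k j * x j) * (∑ j, u k j * y j)) := by
        refine Finset.sum_congr rfl fun k _ => ?_
        rw [← Finset.mul_sum]; ring

lemma aux_nuc (Bmat : Matrix (Fin N) (Fin N) ℝ)
    (hBsym : ∀ i j, Bmat i j = Bmat j i)
    (u : Fin N → Fin N → ℝ) (ν : Fin N → ℝ)
    (hBu : ∀ k i, (∑ j, Bmat i j * u k j) = ν k * u k i)
    (φ : Fin N → ℝ) (hBφ : ∀ i, ∑ j, Bmat i j * φ j = φ i) (k : Fin N) :
    ν k * (∑ j, u k j * φ j) = ∑ j, u k j * φ j := by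
  calc ν k * (∑ j, u k j * φ j) = ∑ j, (ν k * u k j) * φ j := by
        rw [Finset.mul_sum]; exact Finset.sum_congr rfl fun j _ => by ring
    _ = ∑ j, (∑ i, Bmat j i * u k i) * φ j := by
        refine Finset.sum_congr rfl fun j _ => ?_; rw [hBu k j]
    _ = ∑ j, ∑ i, u k i * (Bmat i j * φ j) := by
        refine Finset.sum_congr rfl fun j _ => ?_
        rw [Finset.sum_mul]
        refine Finset.sum_congr rfl fun i _ => ?_
        rw [hBsym j i]; ring
    _ = ∑ i, u k i * (∑ j, Bmat i j * φ j) := by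
        rw [Finset.sum_comm]
        exact Finset.sum_congr rfl fun i _ => (Finset.mul_sum _ _ _).symm
    _ = ∑ j, u k j * φ j := Finset.sum_congr rfl fun i _ => by rw [hBφ i]

lemma aux_quad (a : Fin N → Fin N → ℝ)
    (hsymm : ∀ i j, a i j = a j i) (ha0 : ∀ i j, 0 ≤ a i j)
    (hdeg : ∀ i, 0 < deg N a i)
    (Bmat : Matrix (Fin N) (Fin N) ℝ)
    (hBmat : ∀ i j, Bmat i j = a i j / (Real.sqrt (deg N a i) * Real.sqrt (deg N a j)))
    (v : Fin N → ℝ) :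
    ∑ i, v i * (∑ j, Bmat i j * v j) ≤ ∑ i, v i * v i := by
  set s : Fin N → ℝ := fun i => Real.sqrt (deg N a i) with hs
  have hs0 : ∀ i, 0 < s i := fun i => Real.sqrt_pos.2 (hdeg i)
  have hss : ∀ i, s i * s i = deg N a i := fun i => Real.mul_self_sqrt (hdeg i).le
  set w : Fin N → ℝ := fun i => v i / s i with hw
  have hterm : ∀ i j, v i * (Bmat i j * v j) = a i j * (w i * w j) := by
    intro i j
    rw [hBmat i j, hw]
    field_simp
    ring
  have hwd : ∀ i, w i * w i * deg N a i = v i * v i := by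
    intro i
    have h := (hs0 i).ne'
    rw [hw, ← hss i]
    field_simp
  have hsplit : ∀ i, v i * (∑ j, Bmat i j * v j) = ∑ j, a i j * (w i * w j) := by
    intro i
    rw [Finset.mul_sum]
    exact Finset.sum_congr rfl fun j _ => hterm i j
  simp_rw [hsplit]
  have hbound : ∀ i j, a i j * (w i * w j) ≤ a i j * (w i * w i) / 2 + a i j * (w j * w j) / 2 := by
    intro i j
    nlinarith [ha0 i j, mul_self_nonneg (w i - w j)]
  calc ∑ i, ∑ j, a i j * (w i * w j)
      ≤ ∑ i, ∑ j, (a i j * (w i * w i) / 2 + a i j * (w j * w j) / 2) := by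
        refine Finset.sum_le_sum fun i _ => Finset.sum_le_sum fun j _ => hbound i j
    _ = (∑ i, ∑ j, a i j * (w i * w i) / 2) + ∑ i, ∑ j, a i j * (w j * w j) / 2 := by
        simp_rw [Finset.sum_add_distrib]
    _ = (∑ i, ∑ j, a i j * (w i * w i) / 2) + ∑ i, ∑ j, a i j * (w i * w i) / 2 := by
        congr 1
        rw [Finset.sum_comm]
        exact Finset.sum_congr rfl fun i _ => Finset.sum_congr rfl fun j _ => by
          rw [hsymm i j]
    _ = ∑ i, v i * v i := by
        have : ∀ i, ∑ j, a i j * (w i * w i) / 2 = v i * v i / 2 := by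
          intro i
          rw [show (∑ j, a i j * (w i * w i) / 2) = (∑ j, a i j) * (w i * w i) / 2 by
            rw [Finset.sum_mul, Finset.sum_div]]
          rw [show (∑ j, a i j) = deg N a i from rfl]
          rw [show deg N a i * (w i * w i) = w i * w i * deg N a i by ring, hwd i]
        simp_rw [this]
        rw [← Finset.sum_add_distrib]
        exact Finset.sum_congr rfl fun i _ => by ring




lemma aux_coeff {N : ℕ} (ν c p q : Fin N → ℝ) (lam : ℝ) (hlam0 : 0 ≤ lam)
    (hcsq : ∑ k, c k * c k = 1)
    (hνc : ∀ k, ν k * c k = c k)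
    (hkey : ∀ r : Fin N → ℝ, (∑ l, c l * r l) = 0 → ∀ k, |ν k * r k| ≤ lam * |r k|) :
    |(∑ k, ν k * (p k * q k)) - (∑ l, c l * p l) * (∑ l, c l * q l)|
      ≤ lam * (Real.sqrt (∑ k, p k * p k) * Real.sqrt (∑ k, q k * q k)) := by
  set Sp := ∑ l, c l * p l with hSp
  set Sq := ∑ l, c l * q l with hSq
  set p' : Fin N → ℝ := fun k => p k - Sp * c k with hp'
  set q' : Fin N → ℝ := fun k => q k - Sq * c k with hq'
  have horth : ∀ (r : Fin N → ℝ) (S : ℝ), S = ∑ l, c l * r l →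
      (∑ l, c l * (r l - S * c l)) = 0 := by
    intro r S hS
    have h1 : ∀ l, c l * (r l - S * c l) = c l * r l - S * (c l * c l) := fun l => by ring
    simp_rw [h1]
    rw [Finset.sum_sub_distrib, ← Finset.mul_sum, hcsq, ← hS]
    ring
  have hid : (∑ k, ν k * (p k * q k)) - Sp * Sq = ∑ k, ν k * (p' k * q' k) := by
    have h1 : ∀ k, ν k * (p' k * q' k)
        = ν k * (p k * q k) - Sq * ((ν k * c k) * p k) - Sp * ((ν k * c k) * q k)
          + (Sp * Sq) * ((ν k * c k) * c k) := by
      intro k; simp only [hp', hq']; ring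
    simp_rw [h1, hνc]
    rw [Finset.sum_add_distrib, Finset.sum_sub_distrib, Finset.sum_sub_distrib,
        ← Finset.mul_sum, ← Finset.mul_sum, ← Finset.mul_sum]
    have hcp : ∑ k, c k * p k = Sp := by rw [hSp]
    have hcq : ∑ k, c k * q k = Sq := by rw [hSq]
    rw [hcp, hcq, hcsq]
    ring
  have hple : ∑ k, p' k * p' k ≤ ∑ k, p k * p k := by
    have h1 : ∀ k, p' k * p' k
        = p k * p k - (2 * Sp) * (c k * p k) + (Sp * Sp) * (c k * c k) := by
      intro k; simp only [hp']; ring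
    simp_rw [h1]
    rw [Finset.sum_add_distrib, Finset.sum_sub_distrib, ← Finset.mul_sum, ← Finset.mul_sum]
    have hcp : ∑ k, c k * p k = Sp := by rw [hSp]
    rw [hcp, hcsq]
    nlinarith [mul_self_nonneg Sp]
  have hqle : ∑ k, q' k * q' k ≤ ∑ k, q k * q k := by
    have h1 : ∀ k, q' k * q' k
        = q k * q k - (2 * Sq) * (c k * q k) + (Sq * Sq) * (c k * c k) := by
      intro k; simp only [hq']; ring
    simp_rw [h1]
    rw [Finset.sum_add_distrib, Finset.sum_sub_distrib, ← Finset.mul_sum, ← Finset.mul_sum]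
    have hcq : ∑ k, c k * q k = Sq := by rw [hSq]
    rw [hcq, hcsq]
    nlinarith [mul_self_nonneg Sq]
  have hkp := hkey p' (horth p Sp hSp)
  rw [hid]
  calc |∑ k, ν k * (p' k * q' k)| ≤ ∑ k, |ν k * (p' k * q' k)| :=
        Finset.abs_sum_le_sum_abs _ _
    _ = ∑ k, |ν k * p' k| * |q' k| := by
        refine Finset.sum_congr rfl fun k _ => ?_
        rw [abs_mul, abs_mul, abs_mul]; ring
    _ ≤ ∑ k, (lam * |p' k|) * |q' k| :=
        Finset.sum_le_sum fun k _ => mul_le_mul_of_nonneg_right (hkp k) (abs_nonneg _)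
    _ = lam * ∑ k, |p' k| * |q' k| := by
        rw [Finset.mul_sum]
        exact Finset.sum_congr rfl fun k _ => by ring
    _ ≤ lam * (Real.sqrt (∑ k, |p' k| ^ 2) * Real.sqrt (∑ k, |q' k| ^ 2)) :=
        mul_le_mul_of_nonneg_left (Real.sum_mul_le_sqrt_mul_sqrt _ _ _) hlam0
    _ ≤ lam * (Real.sqrt (∑ k, p k * p k) * Real.sqrt (∑ k, q k * q k)) := by
        have e1 : ∑ k, |p' k| ^ 2 = ∑ k, p' k * p' k :=
          Finset.sum_congr rfl fun k _ => by rw [sq_abs]; ring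
        have e2 : ∑ k, |q' k| ^ 2 = ∑ k, q' k * q' k :=
          Finset.sum_congr rfl fun k _ => by rw [sq_abs]; ring
        rw [e1, e2]
        refine mul_le_mul_of_nonneg_left ?_ hlam0
        exact mul_le_mul (Real.sqrt_le_sqrt hple) (Real.sqrt_le_sqrt hqle)
          (Real.sqrt_nonneg _) (Real.sqrt_nonneg _)

end AuxLem

/-- The maximal volume-biased discrepancy is bounded by the second largest
(in absolute value) eigenvalue of the normalized adjacency matrix: `∂̃ ≤ λ`. -/
theorem stmt_10 (N : ℕ) (hN : 2 ≤ N) (a : Fin N → Fin N → ℝ)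
    (hsymm : ∀ i j, a i j = a j i)
    (h01 : ∀ i j, a i j = 0 ∨ a i j = 1)
    (hdiag : ∀ i, a i i = 0)
    (hdeg : ∀ i, 0 < deg N a i)
    (Bmat : Matrix (Fin N) (Fin N) ℝ)
    (hBmat : ∀ i j, Bmat i j = a i j / (Real.sqrt (deg N a i) * Real.sqrt (deg N a j)))
    (hHerm : Bmat.IsHermitian)
    (ev : Fin N → ℝ) (σ : Equiv.Perm (Fin N))
    (hev : ev = hHerm.eigenvalues ∘ σ) (hmono : Antitone ev)
    (lam : ℝ) (hlam : lam = max (ev ⟨1, by omega⟩) (-(ev ⟨N - 1, by omega⟩))) :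
    maxDiscVol N a ≤ lam := by
  have ha0 : ∀ i j, 0 ≤ a i j := fun i j => by rcases h01 i j with h | h <;> simp [h]
  set s : Fin N → ℝ := fun i => Real.sqrt (deg N a i) with hsdef
  have hs0 : ∀ i, 0 < s i := fun i => Real.sqrt_pos.2 (hdeg i)
  have hss : ∀ i, s i * s i = deg N a i := fun i => Real.mul_self_sqrt (hdeg i).le
  set V : ℝ := vol N a Finset.univ with hVdef
  have hV : 0 < V := by
    rw [hVdef]
    exact Finset.sum_pos (fun i _ => hdeg i) ⟨⟨0, by omega⟩, Finset.mem_univ _⟩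
  have hsV : 0 < Real.sqrt V := Real.sqrt_pos.2 hV
  have hVsq : Real.sqrt V * Real.sqrt V = V := Real.mul_self_sqrt hV.le
  -- eigenvector basis facts
  obtain ⟨u, hBu, hexp, hunorm⟩ :
      ∃ u : Fin N → Fin N → ℝ,
        (∀ k i, (∑ j, Bmat i j * u k j) = hHerm.eigenvalues k * u k i) ∧
        (∀ x : Fin N → ℝ, ∀ i, x i = ∑ k, (∑ j, u k j * x j) * u k i) ∧
        (∀ k, ∑ i, u k i * u k i = 1) := by
    refine ⟨fun k i => hHerm.eigenvectorBasis k i, ?_, ?_, ?_⟩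
    · intro k i
      simpa [Matrix.mulVec, dotProduct] using
        congrFun (hHerm.mulVec_eigenvectorBasis k) i
    · intro x i
      show x i = ∑ k, (∑ j, hHerm.eigenvectorBasis k j * x j) * hHerm.eigenvectorBasis k i
      have h := (hHerm.eigenvectorBasis.sum_repr (WithLp.toLp 2 x : EuclideanSpace ℝ (Fin N))).symm
      have h2 := congrFun (congrArg (fun v : EuclideanSpace ℝ (Fin N) => (v : Fin N → ℝ)) h) i
      simp only [OrthonormalBasis.repr_apply_apply, PiLp.inner_apply, RCLike.inner_apply,
        starRingEnd_apply, star_trivial] at h2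
      simpa [WithLp.ofLp_sum, smul_eq_mul, mul_comm] using h2
    · intro k
      show ∑ i, hHerm.eigenvectorBasis k i * hHerm.eigenvectorBasis k i = 1
      have h := hHerm.eigenvectorBasis.orthonormal.1 k
      rw [EuclideanSpace.norm_eq, Real.sqrt_eq_one] at h
      simpa [sq] using h
  have hBsym : ∀ i j, Bmat i j = Bmat j i := by
    intro i j; rw [hBmat, hBmat, hsymm i j]; ring
  -- all eigenvalues are at most 1
  have hev_le_one : ∀ k, hHerm.eigenvalues k ≤ 1 := by
    intro k
    have h1 := aux_quad a hsymm ha0 hdeg Bmat hBmat (u k)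
    have h2 : ∑ i, u k i * (∑ j, Bmat i j * u k j) = hHerm.eigenvalues k := by
      have h3 : ∀ i, u k i * (∑ j, Bmat i j * u k j)
          = hHerm.eigenvalues k * (u k i * u k i) := by
        intro i; rw [hBu k i]; ring
      simp_rw [h3]
      rw [← Finset.mul_sum, hunorm k, mul_one]
    rw [h2, hunorm k] at h1
    exact h1
  -- the Perron vector
  set φ : Fin N → ℝ := fun i => s i / Real.sqrt V with hφdef
  have hφsq : ∀ i, φ i * φ i = deg N a i / V := by
    intro i
    show s i / Real.sqrt V * (s i / Real.sqrt V) = _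
    rw [div_mul_div_comm, hss i, hVsq]
  have hφnorm : ∑ i, φ i * φ i = 1 := by
    simp_rw [hφsq]
    rw [← Finset.sum_div, show (∑ i, deg N a i) = V by rw [hVdef]; rfl, div_self hV.ne']
  have hBφ : ∀ i, (∑ j, Bmat i j * φ j) = φ i := by
    intro i
    have h1 : ∀ j, Bmat i j * φ j = a i j / (s i * Real.sqrt V) := by
      intro j
      rw [hBmat i j]
      show a i j / (s i * s j) * (s j / Real.sqrt V) = _
      have := (hs0 i).ne'
      have := (hs0 j).ne'
      field_simp
    simp_rw [h1]
    rw [← Finset.sum_div, show (∑ j, a i j) = deg N a i from rfl, ← hss i]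
    show s i * s i / (s i * Real.sqrt V) = s i / Real.sqrt V
    have := (hs0 i).ne'
    field_simp
  have hνc : ∀ k, hHerm.eigenvalues k * (∑ j, u k j * φ j) = ∑ j, u k j * φ j :=
    fun k => aux_nuc Bmat hBsym u hHerm.eigenvalues hBu φ hBφ k
  have hcsq : ∑ k, (∑ j, u k j * φ j) * (∑ j, u k j * φ j) = 1 := by
    rw [← aux_pars u hexp φ φ]; exact hφnorm
  -- index bookkeeping
  have hνev : ∀ k, hHerm.eigenvalues k = ev (σ.symm k) := by
    intro k; rw [hev]; simp
  have hi0 : ∀ j : Fin N, ev j ≤ ev ⟨0, by omega⟩ :=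
    fun j => hmono (by simp [Fin.le_def])
  have hiN : ∀ j : Fin N, ev ⟨N - 1, by omega⟩ ≤ ev j :=
    fun j => hmono (by simp [Fin.le_def]; omega)
  have hlam1 : ev ⟨1, by omega⟩ ≤ lam := by rw [hlam]; exact le_max_left _ _
  have hlam2 : -ev ⟨N - 1, by omega⟩ ≤ lam := by rw [hlam]; exact le_max_right _ _
  have hlam0 : 0 ≤ lam := by
    have h1 : ev ⟨N - 1, by omega⟩ ≤ ev ⟨1, by omega⟩ :=
      hmono (by simp [Fin.le_def]; omega)
    linarith
  -- the key pointwise bound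
  have hkey : ∀ r : Fin N → ℝ, (∑ l, (∑ j, u l j * φ j) * r l) = 0 →
      ∀ k, |hHerm.eigenvalues k * r k| ≤ lam * |r k| := by
    have habs : ∀ j : Fin N, (⟨1, by omega⟩ : Fin N) ≤ j → |ev j| ≤ lam := by
      intro j hj
      exact abs_le.2 ⟨by linarith [hiN j], le_trans (hmono hj) hlam1⟩
    by_cases h12 : ev ⟨1, by omega⟩ = ev ⟨0, by omega⟩
    · intro r _ k
      have h1 : |hHerm.eigenvalues k| ≤ lam := by
        rw [hνev k]
        refine abs_le.2 ⟨by linarith [hiN (σ.symm k)], ?_⟩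
        calc ev (σ.symm k) ≤ ev ⟨0, by omega⟩ := hi0 _
          _ = ev ⟨1, by omega⟩ := h12.symm
          _ ≤ lam := hlam1
      rw [abs_mul]
      exact mul_le_mul_of_nonneg_right h1 (abs_nonneg _)
    · have hlt : ev ⟨1, by omega⟩ < ev ⟨0, by omega⟩ :=
        lt_of_le_of_ne (hi0 _) h12
      have hsupp : ∀ k, k ≠ σ ⟨0, by omega⟩ → (∑ j, u k j * φ j) = 0 := by
        intro k hk
        by_contra hc
        have h1 : hHerm.eigenvalues k = 1 :=
          mul_right_cancel₀ hc (by rw [hνc k, one_mul])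
        have h2 : ev ⟨0, by omega⟩ ≤ 1 := by
          have h := hev_le_one (σ ⟨0, by omega⟩)
          rwa [hνev, Equiv.symm_apply_apply] at h
        have h3 : σ.symm k ≠ ⟨0, by omega⟩ := by
          intro h
          exact hk (by rw [← h, Equiv.apply_symm_apply])
        have h4 : (⟨1, by omega⟩ : Fin N) ≤ σ.symm k := by
          have h5 : (σ.symm k).val ≠ 0 := fun h0 => h3 (Fin.ext h0)
          rw [Fin.le_def]
          show 1 ≤ (σ.symm k).val
          omega
        have h6 : ev (σ.symm k) = 1 := by rw [← hνev k]; exact h1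
        have h7 := hmono h4
        linarith
      have hc0 : (∑ j, u (σ ⟨0, by omega⟩) j * φ j) ≠ 0 := by
        intro h
        have h1 : (∑ k, (∑ j, u k j * φ j) * (∑ j, u k j * φ j)) = 0 :=
          Finset.sum_eq_zero fun k _ => by
            by_cases hk : k = σ ⟨0, by omega⟩
            · rw [hk, h]; ring
            · rw [hsupp k hk]; ring
        rw [hcsq] at h1; norm_num at h1
      intro r hr k
      by_cases hk : k = σ ⟨0, by omega⟩
      · have hsum : (∑ l, (∑ j, u l j * φ j) * r l)
            = (∑ j, u (σ ⟨0, by omega⟩) j * φ j) * r (σ ⟨0, by omega⟩) := by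
          refine Finset.sum_eq_single _ (fun l _ hl => by rw [hsupp l hl]; ring)
            (fun h => absurd (Finset.mem_univ _) h)
        have hr0 : r (σ ⟨0, by omega⟩) = 0 := by
          rw [hsum] at hr
          rcases mul_eq_zero.1 hr with h | h
          · exact absurd h hc0
          · exact h
        rw [hk, hr0]
        simp
      · have h3 : σ.symm k ≠ ⟨0, by omega⟩ := by
          intro h
          exact hk (by rw [← h, Equiv.apply_symm_apply])
        have h4 : (⟨1, by omega⟩ : Fin N) ≤ σ.symm k := by
          have h5 : (σ.symm k).val ≠ 0 := fun h0 => h3 (Fin.ext h0)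
          rw [Fin.le_def]
          show 1 ≤ (σ.symm k).val
          omega
        have h1 : |hHerm.eigenvalues k| ≤ lam := by
          rw [hνev k]; exact habs _ h4
        rw [abs_mul]
        exact mul_le_mul_of_nonneg_right h1 (abs_nonneg _)
  -- the main mixing inequality
  have hmain : ∀ x y : Fin N → ℝ,
      |(∑ i, x i * (∑ j, Bmat i j * y j)) - (∑ i, x i * φ i) * (∑ i, y i * φ i)|
        ≤ lam * (Real.sqrt (∑ i, x i * x i) * Real.sqrt (∑ i, y i * y i)) := by
    intro x y
    rw [aux_spec Bmat u hHerm.eigenvalues hBu hexp x y,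
        aux_pars u hexp x φ, aux_pars u hexp y φ,
        aux_pars u hexp x x, aux_pars u hexp y y]
    have hcomm : ∀ z : Fin N → ℝ,
        (∑ k, (∑ j, u k j * z j) * (∑ j, u k j * φ j))
          = ∑ l, (∑ j, u l j * φ j) * (∑ j, u l j * z j) :=
      fun z => Finset.sum_congr rfl fun k _ => mul_comm _ _
    rw [hcomm x, hcomm y]
    exact aux_coeff hHerm.eigenvalues (fun k => ∑ j, u k j * φ j)
      (fun k => ∑ j, u k j * x j) (fun k => ∑ j, u k j * y j) lam hlam0 hcsq hνc hkey
  -- application to indicator vectors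
  have hres : ∀ (A : Finset (Fin N)) (f : Fin N → ℝ),
      (∑ i, (if i ∈ A then s i else 0) * f i) = ∑ i ∈ A, s i * f i := by
    intro A f
    simp only [ite_mul, zero_mul]
    rw [Finset.sum_ite_mem, Finset.univ_inter]
  have hAB : ∀ A B : Finset (Fin N),
      |eCount N a A B - vol N a A * vol N a B / V| ≤ lam * V := by
    intro A B
    have hvolA : ∀ C : Finset (Fin N), (∑ i, (if i ∈ C then s i else 0) *
        (if i ∈ C then s i else 0)) = vol N a C := by
      intro C
      rw [show (∑ i, (if i ∈ C then s i else 0) * (if i ∈ C then s i else 0))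
          = ∑ i, (if i ∈ C then deg N a i else 0) from
        Finset.sum_congr rfl fun i _ => by by_cases h : i ∈ C <;> simp [h, hss i]]
      rw [Finset.sum_ite_mem, Finset.univ_inter]
      rfl
    have hxφ : ∀ C : Finset (Fin N), (∑ i, (if i ∈ C then s i else 0) * φ i)
        = vol N a C / Real.sqrt V := by
      intro C
      rw [hres C φ]
      rw [show (∑ i ∈ C, s i * φ i) = ∑ i ∈ C, deg N a i / Real.sqrt V from
        Finset.sum_congr rfl fun i _ => by
          show s i * (s i / Real.sqrt V) = _
          rw [← hss i]; ring]
      rw [← Finset.sum_div]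
      rfl
    have hxBy : (∑ i, (if i ∈ A then s i else 0) *
        (∑ j, Bmat i j * (if j ∈ B then s j else 0))) = eCount N a A B := by
      rw [hres A]
      rw [show (∑ i ∈ A, s i * (∑ j, Bmat i j * (if j ∈ B then s j else 0)))
          = ∑ i ∈ A, ∑ j ∈ B, a i j from ?_]
      · rfl
      refine Finset.sum_congr rfl fun i _ => ?_
      rw [show (∑ j, Bmat i j * (if j ∈ B then s j else 0))
          = ∑ j, (if j ∈ B then Bmat i j * s j else 0) from
        Finset.sum_congr rfl fun j _ => by by_cases h : j ∈ B <;> simp [h]]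
      rw [Finset.sum_ite_mem, Finset.univ_inter, Finset.mul_sum]
      refine Finset.sum_congr rfl fun j _ => ?_
      rw [hBmat i j]
      have := (hs0 i).ne'
      have := (hs0 j).ne'
      show s i * (a i j / (s i * s j) * s j) = a i j
      field_simp
    have h := hmain (fun i => if i ∈ A then s i else 0) (fun i => if i ∈ B then s i else 0)
    beta_reduce at h
    rw [hxBy, hxφ A, hxφ B, hvolA A, hvolA B] at h
    have e1 : vol N a A / Real.sqrt V * (vol N a B / Real.sqrt V)
        = vol N a A * vol N a B / V := by
      rw [div_mul_div_comm, hVsq]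
    rw [e1] at h
    refine h.trans ?_
    have hle : ∀ C : Finset (Fin N), Real.sqrt (vol N a C) ≤ Real.sqrt V := by
      intro C
      refine Real.sqrt_le_sqrt ?_
      rw [hVdef]
      exact Finset.sum_le_sum_of_subset_of_nonneg (Finset.subset_univ C)
        (fun i _ _ => (hdeg i).le)
    refine mul_le_mul_of_nonneg_left ?_ hlam0
    calc Real.sqrt (vol N a A) * Real.sqrt (vol N a B)
        ≤ Real.sqrt V * Real.sqrt V :=
          mul_le_mul (hle A) (hle B) (Real.sqrt_nonneg _) (Real.sqrt_nonneg _)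
      _ = V := hVsq
  -- conclusion
  refine Finset.sup'_le _ _ ?_
  rintro ⟨A, B⟩ -
  show |discVol N a A B| ≤ lam
  have hd : discVol N a A B = (eCount N a A B - vol N a A * vol N a B / V) / V := by
    simp only [discVol, ← hVdef]
    field_simp
  rw [hd, abs_div, abs_of_pos hV, div_le_iff₀ hV]
  exact hAB A B
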